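/- For the family BD(\gamma,d) with d \geq 3 and any \gamma > 0, the series \sum_{n=1}^{\infty} \prod_{j=1}^{n} \mu_j(\gamma,d)/\lambda_j(\gamma,d) converges (the process is transient), while for d = 2 it diverges (the process is null-recurrent). -/

import Mathlib

open Finset

/-- Birth rates of the family `BD(γ,d)`. -/
noncomputable def bdLambda (γ : ℝ) (d n : ℕ) : ℝ :=
  (∑ i ∈ Finset.Icc 1 d, (i : ℝ) * γ ^ i * (d.choose i) * ((n - 1).choose (i - 1)))
    + γ * ∑ i ∈ Finset.Icc 1 (d - 1),
        ((d : ℝ) - i) * γ ^ i * (d.choose i) * ((n - 1).choose (i - 1))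

/-- Death rates of the family `BD(γ,d)`. -/
noncomputable def bdMu (γ : ℝ) (d n : ℕ) : ℝ :=
  ∑ i ∈ Finset.Icc 1 d, (i : ℝ) * γ ^ i * (d.choose i) * ((n - 1).choose (i - 1))

lemma icc_to_range (f : ℕ → ℝ) (d : ℕ) :
    ∑ i ∈ Finset.Icc 1 d, f i = ∑ k ∈ Finset.range d, f (k + 1) := by
  rw [← Finset.Ico_add_one_right_eq_Icc, Finset.sum_Ico_eq_sum_range]
  simp [add_comm]

lemma bd_key (γ : ℝ) (d n : ℕ) (hn : 1 ≤ n) : bdLambda γ d n = bdMu γ d (n + 1) := by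
  obtain ⟨m, rfl⟩ : ∃ m, n = m + 1 := ⟨n - 1, by omega⟩
  rcases d with _ | e
  · simp [bdLambda, bdMu]
  unfold bdLambda bdMu
  simp only [Nat.add_sub_cancel, Nat.succ_sub_one]
  rw [icc_to_range, icc_to_range, icc_to_range,
    Finset.sum_range_succ' (fun k => ((k+1 : ℕ) : ℝ) * γ ^ (k+1) * ((e+1).choose (k+1)) * (m.choose ((k+1) - 1))) e,
    Finset.sum_range_succ' (fun k => ((k+1 : ℕ) : ℝ) * γ ^ (k+1) * ((e+1).choose (k+1)) * ((m+1).choose ((k+1) - 1))) e,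
    Finset.mul_sum]
  simp only [Nat.add_sub_cancel]
  have hsplit : ∀ x ∈ range e,
      ((x+1+1 : ℕ) : ℝ) * γ ^ (x+1+1) * ((e+1).choose (x+1+1) : ℝ) * (((m+1).choose (x+1) : ℕ) : ℝ)
        = ((x+1+1 : ℕ) : ℝ) * γ ^ (x+1+1) * ((e+1).choose (x+1+1) : ℝ) * (m.choose x : ℝ)
          + ((x+1+1 : ℕ) : ℝ) * γ ^ (x+1+1) * ((e+1).choose (x+1+1) : ℝ) * (m.choose (x+1) : ℝ) := by
    intro x _
    rw [show (m+1).choose (x+1) = m.choose x + m.choose (x+1) from Nat.choose_succ_succ m x]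
    push_cast
    ring
  rw [Finset.sum_congr rfl hsplit, Finset.sum_add_distrib]
  have hterm : ∀ x ∈ range e,
      γ * ((((e+1 : ℕ) : ℝ) - ((x+1 : ℕ) : ℝ)) * γ ^ (x+1) * ((e+1).choose (x+1) : ℝ) * (m.choose x : ℝ))
        = ((x+1+1 : ℕ) : ℝ) * γ ^ (x+1+1) * ((e+1).choose (x+1+1) : ℝ) * (m.choose x : ℝ) := by
    intro x hx
    have hxe : x ≤ e := (Finset.mem_range.1 hx).le
    have h := congrArg (fun t : ℕ => (t : ℝ)) (Nat.choose_succ_right_eq (e+1) (x+1))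
    simp only [Nat.succ_sub_succ] at h
    rw [Nat.cast_mul, Nat.cast_mul, Nat.cast_sub hxe] at h
    push_cast at h ⊢
    linear_combination (-(γ ^ (x+1) * γ * (m.choose x : ℝ))) * h
  rw [Finset.sum_congr rfl hterm]
  simp only [Nat.choose_zero_right]
  ring

lemma bdMu_pos (γ : ℝ) (hγ : 0 < γ) {d : ℕ} (hd : 1 ≤ d) (n : ℕ) : 0 < bdMu γ d n := by
  unfold bdMu
  apply Finset.sum_pos'
  · intro i hi
    have h1 : 1 ≤ i := (Finset.mem_Icc.1 hi).1
    have : (0:ℝ) ≤ i := by positivity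
    positivity
  · refine ⟨1, Finset.mem_Icc.2 ⟨le_refl 1, hd⟩, ?_⟩
    have hd0 : (0:ℝ) < (d.choose 1 : ℝ) := by
      exact_mod_cast Nat.choose_pos hd
    simp only [Nat.cast_one, pow_one, Nat.choose_zero_right, one_mul, mul_one]
    have h0 : (((n - 1).choose (1 - 1) : ℕ) : ℝ) = 1 := by norm_num
    rw [h0, mul_one]
    exact mul_pos hγ hd0

lemma bdMu_term_le (γ : ℝ) (hγ : 0 < γ) {d : ℕ} (i : ℕ) (hi : i ∈ Finset.Icc 1 d) (n : ℕ) :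
    (i : ℝ) * γ ^ i * (d.choose i) * ((n - 1).choose (i - 1)) ≤ bdMu γ d n := by
  unfold bdMu
  apply Finset.single_le_sum (f := fun (j : ℕ) => (j : ℝ) * γ ^ j * (d.choose j) * ((n - 1).choose (j - 1))) _ hi
  intro j hj
  have h1 : 1 ≤ j := (Finset.mem_Icc.1 hj).1
  have : (0:ℝ) ≤ j := by positivity
  positivity

lemma bd_prod (γ : ℝ) (hγ : 0 < γ) {d : ℕ} (hd : 1 ≤ d) (n : ℕ) :
    ∏ j ∈ Finset.Icc 1 n, bdMu γ d j / bdLambda γ d j = bdMu γ d 1 / bdMu γ d (n + 1) := by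
  induction n with
  | zero => simp [div_self (bdMu_pos γ hγ hd 1).ne']
  | succ k ih =>
      rw [Finset.prod_Icc_succ_top (by omega : 1 ≤ k + 1), ih, bd_key γ d (k+1) (by omega)]
      have h1 := (bdMu_pos γ hγ hd (k+1)).ne'
      have h2 := (bdMu_pos γ hγ hd (k+2)).ne'
      field_simp

theorem stmt_15 (γ : ℝ) (hγ : 0 < γ) (d : ℕ) :
    (3 ≤ d → Summable (fun n : ℕ => ∏ j ∈ Finset.Icc 1 n, bdMu γ d j / bdLambda γ d j)) ∧
    (d = 2 → ¬ Summable (fun n : ℕ => ∏ j ∈ Finset.Icc 1 n, bdMu γ d j / bdLambda γ d j)) := by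
  constructor
  · intro hd3
    have hd1 : 1 ≤ d := by omega
    have hμ1 := bdMu_pos γ hγ hd1 1
    have hK : (0:ℝ) < (d.choose 3 : ℝ) := by exact_mod_cast Nat.choose_pos hd3
    have hprod := bd_prod γ hγ hd1
    rw [show (fun n : ℕ => ∏ j ∈ Finset.Icc 1 n, bdMu γ d j / bdLambda γ d j)
        = fun n : ℕ => bdMu γ d 1 / bdMu γ d (n + 1) from funext hprod]
    rw [← summable_nat_add_iff 2]
    -- summable majorant
    have hs2 : Summable (fun n : ℕ => 1 / ((n:ℝ) + 1) ^ 2) := by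
      have h := Real.summable_one_div_nat_pow.mpr (by norm_num : 1 < 2)
      have := (summable_nat_add_iff 1).mpr h
      refine this.congr fun n => ?_
      push_cast
      ring_nf
    have hsum : Summable (fun n : ℕ =>
        (bdMu γ d 1 * (2 / (3 * γ ^ 3 * (d.choose 3 : ℝ)))) * (1 / ((n:ℝ) + 1) ^ 2)) :=
      hs2.mul_left _
    refine Summable.of_nonneg_of_le (fun n => ?_) (fun n => ?_) hsum
    · have := bdMu_pos γ hγ hd1 (n + 2 + 1)
      positivity
    · -- bound
      have hlow : (3 * γ ^ 3 * (d.choose 3 : ℝ) / 2) * ((n:ℝ) + 1) ^ 2 ≤ bdMu γ d (n + 3) := by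
      -- term i = 3
        have hterm := bdMu_term_le γ hγ 3 (Finset.mem_Icc.2 ⟨by norm_num, hd3⟩) (n + 3)
        have hc : ((n + 3 - 1).choose (3 - 1) : ℕ) = (n+2).choose 2 := by norm_num
        have hchoose : ((n:ℝ) + 1) ^ 2 ≤ 2 * (((n+2).choose 2 : ℕ) : ℝ) := by
          have hnat : (n + 1) ^ 2 ≤ 2 * ((n+2).choose 2) := by
            have hdvd : 2 ∣ (n+2) * (n+1) := by
              rw [mul_comm]
              exact (Nat.even_mul_succ_self (n+1)).two_dvd
            have h2 : 2 * ((n+2).choose 2) = (n+2) * (n+1) := by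
              rw [Nat.choose_two_right, show n + 2 - 1 = n + 1 from rfl]
              exact Nat.mul_div_cancel' hdvd
            rw [h2]
            nlinarith
          exact_mod_cast hnat
        calc (3 * γ ^ 3 * (d.choose 3 : ℝ) / 2) * ((n:ℝ) + 1) ^ 2
            ≤ (3 * γ ^ 3 * (d.choose 3 : ℝ) / 2) * (2 * (((n+2).choose 2 : ℕ) : ℝ)) := by
              apply mul_le_mul_of_nonneg_left hchoose
              positivity
          _ = (3 : ℝ) * γ ^ 3 * (d.choose 3 : ℝ) * (((n + 3 - 1).choose (3 - 1) : ℕ) : ℝ) := by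
              rw [hc]; ring
          _ ≤ bdMu γ d (n + 3) := by
              have := bdMu_term_le γ hγ 3 (Finset.mem_Icc.2 ⟨by norm_num, hd3⟩) (n + 3)
              push_cast at this ⊢
              linarith
      have hposlow : (0:ℝ) < (3 * γ ^ 3 * (d.choose 3 : ℝ) / 2) * ((n:ℝ) + 1) ^ 2 := by positivity
      have hle : bdMu γ d 1 / bdMu γ d (n + 2 + 1)
          ≤ bdMu γ d 1 / ((3 * γ ^ 3 * (d.choose 3 : ℝ) / 2) * ((n:ℝ) + 1) ^ 2) := by
        apply div_le_div_of_nonneg_left hμ1.le hposlow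
        exact hlow
      refine hle.trans (le_of_eq ?_)
      field_simp
  · intro hd2 hs
    subst hd2
    have hd1 : (1:ℕ) ≤ 2 := by norm_num
    have hprod := bd_prod γ hγ hd1
    have hmu : ∀ n : ℕ, bdMu γ 2 (n + 1) = 2 * γ * (1 + γ * n) := by
      intro n
      unfold bdMu
      rw [show Finset.Icc 1 2 = {1, 2} by decide]
      rw [Finset.sum_insert (by decide), Finset.sum_singleton]
      simp only [Nat.add_sub_cancel, show (1:ℕ)-1 = 0 from rfl, show (2:ℕ)-1 = 1 from rfl,
        Nat.choose_zero_right, Nat.choose_one_right, Nat.choose_self]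
      push_cast
      ring
    have hf : ∀ n : ℕ, (∏ j ∈ Finset.Icc 1 n, bdMu γ 2 j / bdLambda γ 2 j) = 1 / (1 + γ * n) := by
      intro n
      rw [hprod n, hmu n, show bdMu γ 2 1 = 2 * γ * (1 + γ * 0) from by exact_mod_cast hmu 0]
      have hpos : (0:ℝ) < 1 + γ * n := by positivity
      field_simp
      ring
    rw [show (fun n : ℕ => ∏ j ∈ Finset.Icc 1 n, bdMu γ 2 j / bdLambda γ 2 j)
        = fun n : ℕ => 1 / (1 + γ * n) from funext hf] at hs
    apply Real.not_summable_one_div_natCast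
    refine Summable.of_nonneg_of_le (fun n => by positivity) (fun n => ?_) (hs.mul_left (1 + γ))
    rcases n with _ | m
    · simp
      positivity
    · have hpos : (0:ℝ) < 1 + γ * (m + 1) := by positivity
      have hpos2 : (0:ℝ) < ((m:ℝ) + 1) := by positivity
      push_cast
      rw [mul_one_div, div_le_div_iff₀ hpos2 hpos]
      nlinarith
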